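/- arXiv:2006.09371 — 4 statements merged into one kernel-verified Lean document; each statement's English description precedes it below -/
import Mathlib

section
/- If X is a weakly prime submodule of M with X(X:_R M) ≠ 0, then X is a prime submodule of M. -/
open MulOpposite Submodule

variable {R : Type*} [Ring R] {M : Type*} [AddCommGroup M] [Module Rᵐᵒᵖ M]

/-- The product `Y·A` of a set of elements of a right `R`-module `M` and a set of ring
elements: the submodule of all finite sums `Σ yᵢ·aᵢ` with `yᵢ ∈ Y`, `aᵢ ∈ A`. -/
def sProd (Y : Set M) (A : Set R) : Submodule Rᵐᵒᵖ M :=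
  Submodule.span Rᵐᵒᵖ {z | ∃ y ∈ Y, ∃ a ∈ A, z = op a • y}

/-- `(X :_R N) = {r : R | N·r ⊆ X}`. -/
def colR (X : Set M) (N : Set M) : Set R := {r | ∀ m ∈ N, op r • m ∈ X}

/-- `(X :_M A) = {m : M | m·A ⊆ X}`. -/
def colM (X : Set M) (A : Set R) : Set M := {m | ∀ r ∈ A, op r • m ∈ X}

/-- A function `φ : S(M) → S(M) ∪ {∅}` (values are either `∅` or submodules) with
`φ(X) ⊆ X` for every submodule `X`. -/
def GoodPhi (φ : Submodule Rᵐᵒᵖ M → Set M) : Prop :=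
  ∀ N : Submodule Rᵐᵒᵖ M, φ N ⊆ N ∧
    (φ N = (∅ : Set M) ∨ ∃ P : Submodule Rᵐᵒᵖ M, φ N = (P : Set M))

/-- `X` is a φ-prime submodule of the right `R`-module `M`. -/
def PhiPrime (φ : Submodule Rᵐᵒᵖ M → Set M) (X : Submodule Rᵐᵒᵖ M) : Prop :=
  X ≠ ⊤ ∧ ∀ (Y : Submodule Rᵐᵒᵖ M) (I : TwoSidedIdeal R),
    (sProd (Y : Set M) (I : Set R) : Set M) ⊆ (X : Set M) →
    ¬((sProd (Y : Set M) (I : Set R) : Set M) ⊆ φ X) →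
    (Y : Set M) ⊆ (X : Set M) ∨ (I : Set R) ⊆ colR (X : Set M) Set.univ

/-- `X` is a prime submodule of the right `R`-module `M`. -/
def PrimeSub (X : Submodule Rᵐᵒᵖ M) : Prop :=
  X ≠ ⊤ ∧ ∀ (Y : Submodule Rᵐᵒᵖ M) (I : TwoSidedIdeal R),
    (sProd (Y : Set M) (I : Set R) : Set M) ⊆ (X : Set M) →
    (Y : Set M) ⊆ (X : Set M) ∨ (I : Set R) ⊆ colR (X : Set M) Set.univ

/-- `X` is a weakly prime submodule of the right `R`-module `M`. -/
def WeaklyPrime (X : Submodule Rᵐᵒᵖ M) : Prop :=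
  X ≠ ⊤ ∧ ∀ (Y : Submodule Rᵐᵒᵖ M) (I : TwoSidedIdeal R),
    sProd (Y : Set M) (I : Set R) ≠ ⊥ →
    (sProd (Y : Set M) (I : Set R) : Set M) ⊆ (X : Set M) →
    (Y : Set M) ⊆ (X : Set M) ∨ (I : Set R) ⊆ colR (X : Set M) Set.univ

/-- `X` is an almost prime submodule of the right `R`-module `M`. -/
def AlmostPrime (X : Submodule Rᵐᵒᵖ M) : Prop :=
  X ≠ ⊤ ∧ ∀ (Y : Submodule Rᵐᵒᵖ M) (I : TwoSidedIdeal R),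
    (sProd (Y : Set M) (I : Set R) : Set M) ⊆ (X : Set M) →
    ¬((sProd (Y : Set M) (I : Set R) : Set M) ⊆
        (sProd (X : Set M) ((colR (X : Set M) Set.univ : Set R)) : Set M)) →
    (Y : Set M) ⊆ (X : Set M) ∨ (I : Set R) ⊆ colR (X : Set M) Set.univ

/-- `powAct X n = X (X :_R M)ⁿ`. -/
def powAct (X : Submodule Rᵐᵒᵖ M) : ℕ → Submodule Rᵐᵒᵖ M
  | 0 => X
  | n + 1 => sProd (powAct X n : Set M) ((colR (X : Set M) Set.univ : Set R))

/-- The product of two sets of ring elements: all finite sums `Σ aᵢbᵢ`, `aᵢ ∈ A`, `bᵢ ∈ B`. -/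
def idMul (A B : Set R) : Set R :=
  (AddSubmonoid.closure {x | ∃ a ∈ A, ∃ b ∈ B, x = a * b} : AddSubmonoid R)

/-- A prime (two-sided) ideal of a possibly noncommutative ring. -/
def TIPrime (P : TwoSidedIdeal R) : Prop :=
  (P : Set R) ≠ Set.univ ∧ ∀ I J : TwoSidedIdeal R,
    idMul (I : Set R) (J : Set R) ⊆ (P : Set R) →
    (I : Set R) ⊆ (P : Set R) ∨ (J : Set R) ⊆ (P : Set R)

/-- The radical `√A`: the intersection of all prime two-sided ideals containing `A`. -/
def radSet (A : Set R) : Set R :=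
  {x | ∀ P : TwoSidedIdeal R, TIPrime P → A ⊆ (P : Set R) → x ∈ (P : Set R)}

/-- A ψ-prime two-sided ideal of a possibly noncommutative ring. -/
def PsiPrime (ψ : TwoSidedIdeal R → Set R) (A : TwoSidedIdeal R) : Prop :=
  (A : Set R) ≠ Set.univ ∧ ∀ I J : TwoSidedIdeal R,
    idMul (I : Set R) (J : Set R) ⊆ (A : Set R) →
    ¬(idMul (I : Set R) (J : Set R) ⊆ ψ A) →
    (I : Set R) ⊆ (A : Set R) ∨ (J : Set R) ⊆ (A : Set R)

/-- The induced function `φ_Y` on submodules of `M/Y`: `φ_Y(X/Y) = (φ(X)+Y)/Y`. -/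
def phiQuot (φ : Submodule Rᵐᵒᵖ M → Set M) (Y : Submodule Rᵐᵒᵖ M) :
    Submodule Rᵐᵒᵖ (M ⧸ Y) → Set (M ⧸ Y) :=
  fun Q => Y.mkQ '' (φ (Q.comap Y.mkQ))

/-- The colon `(X :_R Y)` of two submodules, as a two-sided ideal of `R`. -/
def colTI (X Y : Submodule Rᵐᵒᵖ M) : TwoSidedIdeal R :=
  TwoSidedIdeal.mk' (colR (X : Set M) (Y : Set M))
    (by intro m hm; simp)
    (by intro x y hx hy m hm
        rw [op_add, add_smul]
        exact X.add_mem (hx m hm) (hy m hm))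
    (by intro x hx m hm
        rw [op_neg, neg_smul]
        exact X.neg_mem (hx m hm))
    (by intro x y hy m hm
        rw [op_mul, mul_smul]
        exact hy _ (Y.smul_mem (op x) hm))
    (by intro x y hx m hm
        rw [op_mul, mul_smul]
        exact X.smul_mem (op y) (hx m hm))

/-- The colon `(X :_M I)` as a submodule of `M`, for a two-sided ideal `I`. -/
def colMS (X : Submodule Rᵐᵒᵖ M) (I : TwoSidedIdeal R) : Submodule Rᵐᵒᵖ M where
  carrier := colM (X : Set M) (I : Set R)
  add_mem' := by
    intro a b ha hb r hr
    rw [smul_add]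
    exact X.add_mem (ha r hr) (hb r hr)
  zero_mem' := by
    intro r hr
    rw [smul_zero]
    exact X.zero_mem
  smul_mem' := by
    intro c m hm r hr
    rw [← mul_smul, show op r * c = op (unop c * r) from by rw [op_mul, op_unop]]
    exact hm _ (I.mul_mem_left _ _ hr)

/-- `M` is a multiplication right `R`-module: every submodule `X` equals `M(X :_R M)`. -/
def IsMultiplication (R : Type*) [Ring R] (M : Type*) [AddCommGroup M]
    [Module Rᵐᵒᵖ M] : Prop :=
  ∀ X : Submodule Rᵐᵒᵖ M, X = sProd (Set.univ : Set M) ((colR (X : Set M) Set.univ : Set R))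

/-- The product `XY = M(X :_R M)(Y :_R M)` of two submodules of a multiplication module. -/
def mprod (X Y : Submodule Rᵐᵒᵖ M) : Submodule Rᵐᵒᵖ M :=
  sProd ((sProd (Set.univ : Set M) ((colR (X : Set M) Set.univ : Set R)) : Submodule Rᵐᵒᵖ M) : Set M)
    ((colR (Y : Set M) Set.univ : Set R))

/-- A φ-m-system in a right `R`-module `M`. -/
def PhiMSystem (φ : Submodule Rᵐᵒᵖ M → Set M) (S : Set M) : Prop :=
  S.Nonempty ∧ ∀ (Y₁ Y₂ : Submodule Rᵐᵒᵖ M) (I : TwoSidedIdeal R),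
    ((Y₁ ⊔ Y₂ : Submodule Rᵐᵒᵖ M) : Set M) ∩ S ≠ ∅ →
    ((Y₁ ⊔ sProd (Set.univ : Set M) (I : Set R) : Submodule Rᵐᵒᵖ M) : Set M) ∩ S ≠ ∅ →
    ¬((sProd (Y₂ : Set M) (I : Set R) : Set M) ⊆ φ (Submodule.span Rᵐᵒᵖ Sᶜ)) →
    ((Y₁ ⊔ sProd (Y₂ : Set M) (I : Set R) : Submodule Rᵐᵒᵖ M) : Set M) ∩ S ≠ ∅

/-- The sum of two two-sided ideals, as a two-sided ideal. -/
def addTI (I J : TwoSidedIdeal R) : TwoSidedIdeal R :=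
  TwoSidedIdeal.mk' {x | ∃ i ∈ I, ∃ j ∈ J, x = i + j}
    ⟨0, I.zero_mem, 0, J.zero_mem, (add_zero 0).symm⟩
    (by rintro x y ⟨i1, hi1, j1, hj1, rfl⟩ ⟨i2, hi2, j2, hj2, rfl⟩
        exact ⟨i1 + i2, I.add_mem hi1 hi2, j1 + j2, J.add_mem hj1 hj2, by abel⟩)
    (by rintro x ⟨i, hi, j, hj, rfl⟩
        exact ⟨-i, I.neg_mem hi, -j, J.neg_mem hj, by abel⟩)
    (by rintro x y ⟨i, hi, j, hj, rfl⟩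
        exact ⟨x * i, I.mul_mem_left _ _ hi, x * j, J.mul_mem_left _ _ hj, mul_add x i j⟩)
    (by rintro x y ⟨i, hi, j, hj, rfl⟩
        exact ⟨i * y, I.mul_mem_right _ _ hi, j * y, J.mul_mem_right _ _ hj, add_mul i j y⟩)

lemma mem_addTI {I J : TwoSidedIdeal R} {x : R} :
    x ∈ addTI I J ↔ ∃ i ∈ I, ∃ j ∈ J, x = i + j :=
  TwoSidedIdeal.mem_mk' _ _ _ _ _ _ _

lemma zero_mem_colR (X : Submodule Rᵐᵒᵖ M) :
    (0 : R) ∈ colR (X : Set M) Set.univ := by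
  intro m _
  rw [op_zero, zero_smul]
  exact X.zero_mem

lemma mem_colTI_top {X : Submodule Rᵐᵒᵖ M} {r : R} :
    r ∈ colTI X ⊤ ↔ r ∈ colR (X : Set M) Set.univ := by
  refine (TwoSidedIdeal.mem_mk' _ _ _ _ _ _ _).trans ?_
  constructor
  · intro hr m _; exact hr m trivial
  · intro hr m _; exact hr m trivial

/-- If `X` is a weakly prime submodule of `M` with
`X(X :_R M) ≠ 0`, then `X` is a prime submodule of `M`. -/
theorem stmt_3 (X : Submodule Rᵐᵒᵖ M) (hX : WeaklyPrime X)
    (h : sProd (X : Set M) ((colR (X : Set M) Set.univ : Set R)) ≠ ⊥) :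
    PrimeSub X := by
  obtain ⟨hne, hw⟩ := hX
  refine ⟨hne, fun Y I hYI => ?_⟩
  set J : TwoSidedIdeal R := addTI I (colTI X ⊤) with hJdef
  set Y' : Submodule Rᵐᵒᵖ M := Y ⊔ X with hY'def
  -- colR X univ ⊆ J
  have hcolJ : (colR (X : Set M) Set.univ : Set R) ⊆ (J : Set R) := by
    intro a ha
    exact mem_addTI.2 ⟨0, I.zero_mem, a, mem_colTI_top.2 ha, (zero_add a).symm⟩
  have hIJ : (I : Set R) ⊆ (J : Set R) := by
    intro a ha
    exact mem_addTI.2 ⟨a, ha, 0, mem_colTI_top.2 (zero_mem_colR X), (add_zero a).symm⟩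
  -- sProd X col ≤ sProd Y' J
  have hmono : sProd (X : Set M) ((colR (X : Set M) Set.univ : Set R)) ≤
      sProd (Y' : Set M) (J : Set R) := by
    apply Submodule.span_mono
    rintro z ⟨y, hy, a, ha, rfl⟩
    exact ⟨y, (le_sup_right : X ≤ Y') hy, a, hcolJ ha, rfl⟩
  -- sProd Y' J ⊆ X
  have hsub : (sProd (Y' : Set M) (J : Set R) : Set M) ⊆ (X : Set M) := by
    rw [sProd]
    refine SetLike.coe_subset_coe.2 (Submodule.span_le.2 ?_)
    rintro z ⟨y, hy, a, ha, rfl⟩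
    obtain ⟨y₁, hy₁, y₂, hy₂, rfl⟩ := Submodule.mem_sup.1 hy
    obtain ⟨i, hi, j, hj, rfl⟩ := mem_addTI.1 ha
    have hj' : j ∈ colR (X : Set M) Set.univ := mem_colTI_top.1 hj
    have h1 : op i • y₁ ∈ X :=
      hYI (Submodule.subset_span ⟨y₁, hy₁, i, hi, rfl⟩)
    have h2 : op i • y₂ ∈ X := X.smul_mem _ hy₂
    have h3 : op j • y₁ ∈ X := hj' y₁ trivial
    have h4 : op j • y₂ ∈ X := X.smul_mem _ hy₂
    have : op (i + j) • (y₁ + y₂) =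
        op i • y₁ + op i • y₂ + (op j • y₁ + op j • y₂) := by
      rw [op_add, add_smul, smul_add, smul_add]
    rw [this]
    exact X.add_mem (X.add_mem h1 h2) (X.add_mem h3 h4)
  have hnb : sProd (Y' : Set M) (J : Set R) ≠ ⊥ := by
    intro hb
    exact h (le_bot_iff.1 (hb ▸ hmono))
  rcases hw Y' J hnb hsub with h1 | h2
  · left
    intro m hm
    exact h1 ((le_sup_left : Y ≤ Y') hm)
  · right
    exact fun r hr => h2 (hIJ hr)
end

section
/- If X is a φ-prime submodule of M such that φ(X) ⊆ X(X:_R M)^2, then X is φ_ω-prime; that is, for every submodule Y of M and every ideal I of R, YI ⊆ X and YI ⊄ ∩_{n=1}^{∞} X(X:_R M)^n imply Y ⊆ X or I ⊆ (X:_R M). -/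
open MulOpposite Submodule

variable {R : Type*} [Ring R] {M : Type*} [AddCommGroup M] [Module Rᵐᵒᵖ M]

lemma sProd_mono {A B : Set M} {C D : Set R} (hAB : A ⊆ B) (hCD : C ⊆ D) :
    sProd A C ≤ sProd B D := by
  apply Submodule.span_mono
  rintro z ⟨y, hy, a, ha, rfl⟩
  exact ⟨y, hAB hy, a, hCD ha, rfl⟩

lemma sProd_le_self (A : Submodule Rᵐᵒᵖ M) (B : Set R) : sProd (A : Set M) B ≤ A := by
  rw [sProd, Submodule.span_le]
  rintro z ⟨y, hy, a, _, rfl⟩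
  exact A.smul_mem _ hy

/-- If `X` is a φ-prime submodule of `M` such that
`φ(X) ⊆ X(X :_R M)²`, then `X` is `φ_ω`-prime: for every submodule `Y` and ideal `I`,
`YI ⊆ X` and `YI ⊄ ⋂ₙ X(X :_R M)ⁿ` imply `Y ⊆ X` or `I ⊆ (X :_R M)`. -/
theorem stmt_4 (φ : Submodule Rᵐᵒᵖ M → Set M) (hφ : GoodPhi φ)
    (X : Submodule Rᵐᵒᵖ M) (h1 : PhiPrime φ X)
    (h2 : φ X ⊆ (powAct X 2 : Set M)) :
    ∀ (Y : Submodule Rᵐᵒᵖ M) (I : TwoSidedIdeal R),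
      (sProd (Y : Set M) (I : Set R) : Set M) ⊆ (X : Set M) →
      ¬((sProd (Y : Set M) (I : Set R) : Set M) ⊆ ⋂ n : ℕ, (powAct X (n + 1) : Set M)) →
      (Y : Set M) ⊆ (X : Set M) ∨ (I : Set R) ⊆ (colR (X : Set M) Set.univ : Set R) := by
  intro Y I hYX hn
  by_contra hcon
  push_neg at hcon
  obtain ⟨hY, hI⟩ := hcon
  set J : Set R := colR (X : Set M) Set.univ with hJ
  -- Step 1: YI ⊆ φ X
  have hYIφ : (sProd (Y : Set M) (I : Set R) : Set M) ⊆ φ X := by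
    by_contra hc
    rcases h1.2 Y I hYX hc with h | h
    · exact hY h
    · exact hI h
  -- the ideal K = I + (X : M)
  set K : TwoSidedIdeal R := TwoSidedIdeal.mk'
    {x : R | ∃ i ∈ (I : Set R), ∃ j ∈ J, x = i + j}
    ⟨0, I.zero_mem, 0, fun m _ => by simp, by simp⟩
    (by rintro _ _ ⟨i, hi, j, hj, rfl⟩ ⟨i', hi', j', hj', rfl⟩
        exact ⟨i + i', I.add_mem hi hi', j + j',
          fun m hm => by rw [op_add, add_smul]; exact X.add_mem (hj m hm) (hj' m hm),
          by abel⟩)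
    (by rintro _ ⟨i, hi, j, hj, rfl⟩
        exact ⟨-i, I.neg_mem hi, -j,
          fun m hm => by rw [op_neg, neg_smul]; exact X.neg_mem (hj m hm), neg_add i j⟩)
    (by rintro x _ ⟨i, hi, j, hj, rfl⟩
        refine ⟨x * i, I.mul_mem_left _ _ hi, x * j, fun m hm => ?_, mul_add x i j⟩
        rw [op_mul, mul_smul]
        exact hj _ trivial)
    (by rintro _ y ⟨i, hi, j, hj, rfl⟩
        refine ⟨i * y, I.mul_mem_right _ _ hi, j * y, fun m hm => ?_, add_mul i j y⟩
        rw [op_mul, mul_smul]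
        exact X.smul_mem _ (hj m hm)) with hK
  have hmemK : ∀ x : R, x ∈ K ↔ ∃ i ∈ (I : Set R), ∃ j ∈ J, x = i + j :=
    fun x => TwoSidedIdeal.mem_mk' _ _ _ _ _ _ x
  have hIK : (I : Set R) ⊆ (K : Set R) := by
    intro i hi
    exact (hmemK i).2 ⟨i, hi, 0, fun m _ => by simp, (add_zero i).symm⟩
  have hJK : J ⊆ (K : Set R) := by
    intro j hj
    exact (hmemK j).2 ⟨0, I.zero_mem, j, hj, (zero_add j).symm⟩
  set Y' : Submodule Rᵐᵒᵖ M := X ⊔ Y with hY'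
  have hXY' : (X : Set M) ⊆ (Y' : Set M) := SetLike.coe_subset_coe.2 le_sup_left
  -- Step 2: Y'K ⊆ X
  have hsub : (sProd (Y' : Set M) (K : Set R) : Set M) ⊆ (X : Set M) := by
    refine SetLike.coe_subset_coe.2 ?_
    rw [sProd, Submodule.span_le]
    rintro _ ⟨y, hy, a, ha, rfl⟩
    rcases (hmemK a).1 ha with ⟨i, hi, j, hj, rfl⟩
    rcases Submodule.mem_sup.1 hy with ⟨x, hx, y', hy', rfl⟩
    have h1' : op i • x ∈ X := X.smul_mem _ hx
    have h2' : op i • y' ∈ X := hYX (Submodule.subset_span ⟨y', hy', i, hi, rfl⟩)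
    have h3' : op j • (x + y') ∈ X := hj _ trivial
    have : op (i + j) • (x + y') = (op i • x + op i • y') + op j • (x + y') := by
      rw [op_add, add_smul, smul_add]
    rw [this]
    exact X.add_mem (X.add_mem h1' h2') h3'
  -- Step 3: Y'K ⊆ φ X
  have hKφ : (sProd (Y' : Set M) (K : Set R) : Set M) ⊆ φ X := by
    by_contra hc
    rcases h1.2 Y' K hsub hc with h | h
    · exact hY (Set.Subset.trans (SetLike.coe_subset_coe.2 le_sup_right) h)
    · exact hI (Set.Subset.trans hIK h)
  -- Step 4: XJ ⊆ XJ²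
  have hkey : (powAct X 1 : Set M) ⊆ (powAct X 2 : Set M) := by
    refine Set.Subset.trans ?_ (Set.Subset.trans hKφ h2)
    exact SetLike.coe_subset_coe.2 (sProd_mono hXY' hJK)
  -- Step 5: XJ ⊆ XJⁿ⁺¹ for all n
  have hchain : ∀ n : ℕ, (powAct X 1 : Set M) ⊆ (powAct X (n + 1) : Set M) := by
    intro n
    induction n with
    | zero => exact Set.Subset.rfl
    | succ n ih =>
      refine Set.Subset.trans hkey ?_
      exact SetLike.coe_subset_coe.2 (sProd_mono ih Set.Subset.rfl)
  -- Step 6: YI ⊆ XJⁿ⁺¹ for all n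
  have hall : ∀ n : ℕ, (sProd (Y : Set M) (I : Set R) : Set M) ⊆ (powAct X (n + 1) : Set M) := by
    intro n
    have hYI2 : (sProd (Y : Set M) (I : Set R) : Set M) ⊆ (powAct X 2 : Set M) :=
      Set.Subset.trans hYIφ h2
    cases n with
    | zero =>
      refine Set.Subset.trans hYI2 ?_
      exact SetLike.coe_subset_coe.2 (sProd_le_self (powAct X 1) J)
    | succ n =>
      refine Set.Subset.trans hYI2 ?_
      exact SetLike.coe_subset_coe.2 (sProd_mono (hchain n) Set.Subset.rfl)
  exact hn (Set.subset_iInter fun n => hall n)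
end

section
/- Let X be a φ-prime submodule of M with φ(X) a submodule of M (φ(X) ≠ ∅). Then: (1) either (X:_R M) ⊆ √((φ(X):_R M)) or √((φ(X):_R M)) ⊆ (X:_R M); (2) if (X:_R M) ⊊ √((φ(X):_R M)), then X is not prime; (3) if √((φ(X):_R M)) ⊊ (X:_R M), then X is prime; (4) if φ(X) is a radical submodule of M, then either (X:_R M) = (φ(X):_R M) or X is prime. -/
open MulOpposite Submodule

variable {R : Type*} [Ring R] {M : Type*} [AddCommGroup M] [Module Rᵐᵒᵖ M]

/-! ### Auxiliary lemmas for Statement 5 -/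

lemma mem_sProd_gen {Y : Set M} {A : Set R} {y : M} {a : R} (hy : y ∈ Y) (ha : a ∈ A) :
    op a • y ∈ sProd Y A :=
  Submodule.subset_span ⟨y, hy, a, ha, rfl⟩

lemma sProd_le_of {Y : Set M} {A : Set R} {X : Submodule Rᵐᵒᵖ M}
    (h : ∀ y ∈ Y, ∀ a ∈ A, op a • y ∈ X) : (sProd Y A : Set M) ⊆ (X : Set M) := by
  have hle : sProd Y A ≤ X := by
    rw [sProd, Submodule.span_le]
    rintro z ⟨y, hy, a, ha, rfl⟩
    exact h y hy a ha
  exact hle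

lemma sProd_mono_s5 {Y₁ Y₂ : Set M} {A₁ A₂ : Set R} (hY : Y₁ ⊆ Y₂) (hA : A₁ ⊆ A₂) :
    sProd Y₁ A₁ ≤ sProd Y₂ A₂ :=
  Submodule.span_mono (by rintro z ⟨y, hy, a, ha, rfl⟩; exact ⟨y, hY hy, a, hA ha, rfl⟩)

lemma coe_colTI_top (X : Submodule Rᵐᵒᵖ M) :
    ((colTI X (⊤ : Submodule Rᵐᵒᵖ M)) : Set R) = colR (X : Set M) Set.univ := by
  simp only [colTI, TwoSidedIdeal.coe_mk']
  simp [colR]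

/-- The sum of two two-sided ideals, as a two-sided ideal. -/
def tiAdd (I J : TwoSidedIdeal R) : TwoSidedIdeal R :=
  TwoSidedIdeal.mk' {x | ∃ i ∈ I, ∃ j ∈ J, x = i + j}
    ⟨0, I.zero_mem, 0, J.zero_mem, by simp⟩
    (by rintro x y ⟨i1, hi1, j1, hj1, rfl⟩ ⟨i2, hi2, j2, hj2, rfl⟩
        exact ⟨i1 + i2, I.add_mem hi1 hi2, j1 + j2, J.add_mem hj1 hj2, by abel⟩)
    (by rintro x ⟨i, hi, j, hj, rfl⟩
        exact ⟨-i, I.neg_mem hi, -j, J.neg_mem hj, by abel⟩)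
    (by rintro x y ⟨i, hi, j, hj, rfl⟩
        exact ⟨x * i, I.mul_mem_left _ _ hi, x * j, J.mul_mem_left _ _ hj, mul_add x i j⟩)
    (by rintro x y ⟨i, hi, j, hj, rfl⟩
        exact ⟨i * y, I.mul_mem_right _ _ hi, j * y, J.mul_mem_right _ _ hj, add_mul i j y⟩)

lemma mem_tiAdd {I J : TwoSidedIdeal R} {x : R} :
    x ∈ tiAdd I J ↔ ∃ i ∈ I, ∃ j ∈ J, x = i + j := by
  rw [tiAdd, TwoSidedIdeal.mem_mk']
  exact Iff.rfl

/-- If `X` is a prime submodule, then `(X :_R M)` is a prime two-sided ideal. -/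
lemma primeSub_TIPrime {X : Submodule Rᵐᵒᵖ M} (h : PrimeSub X) :
    TIPrime (colTI X (⊤ : Submodule Rᵐᵒᵖ M)) := by
  constructor
  · rw [coe_colTI_top]
    intro heq
    have h1 : (1 : R) ∈ colR (X : Set M) Set.univ := heq ▸ Set.mem_univ 1
    apply h.1
    rw [eq_top_iff']
    intro m
    simpa using h1 m (Set.mem_univ m)
  · intro I J hIJ
    rw [coe_colTI_top] at hIJ
    have hY : sProd (Set.univ : Set M) (I : Set R) ≤ colMS X J := by
      rw [sProd, Submodule.span_le]
      rintro z ⟨m, -, a, ha, rfl⟩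
      intro r hr
      have : op r • op a • m = op (a * r) • m := by
        rw [op_mul, mul_smul]
      rw [this]
      exact hIJ (AddSubmonoid.subset_closure ⟨a, ha, r, hr, rfl⟩) m (Set.mem_univ m)
    have h1 : (sProd ((sProd (Set.univ : Set M) (I : Set R) : Submodule Rᵐᵒᵖ M) : Set M)
        (J : Set R) : Set M) ⊆ (X : Set M) := by
      apply sProd_le_of
      intro y hy b hb
      exact hY hy b hb
    rcases h.2 (sProd (Set.univ : Set M) (I : Set R)) J h1 with hL | hR
    · left
      rw [coe_colTI_top]
      intro a ha m _
      exact hL (mem_sProd_gen (Set.mem_univ m) ha)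
    · right
      rw [coe_colTI_top]
      exact hR

/-- Key lemma: if `X` is φ-prime but not prime, then `X(X :_R M) ⊆ φ(X)`. -/
lemma key_XA_sub (φ : Submodule Rᵐᵒᵖ M → Set M) (hφ : GoodPhi φ) (X : Submodule Rᵐᵒᵖ M)
    (hX : PhiPrime φ X) (hnp : ¬ PrimeSub X) :
    (sProd (X : Set M) ((colR (X : Set M) Set.univ : Set R)) : Set M) ⊆ φ X := by
  rw [PrimeSub, not_and] at hnp
  have hnp2 := hnp hX.1
  push_neg at hnp2
  obtain ⟨Y, I, hYI, hYX, hIA⟩ := hnp2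
  have hYIφ : (sProd (Y : Set M) (I : Set R) : Set M) ⊆ φ X := by
    by_contra hc
    rcases hX.2 Y I hYI hc with h | h
    · exact hYX h
    · exact hIA h
  by_contra h
  set TA := colTI X (⊤ : Submodule Rᵐᵒᵖ M) with hTA
  have hsub : (sProd ((Y ⊔ X : Submodule Rᵐᵒᵖ M) : Set M) ((tiAdd I TA : TwoSidedIdeal R) : Set R) :
      Set M) ⊆ (X : Set M) := by
    apply sProd_le_of
    intro y' hy' b hb
    rw [SetLike.mem_coe, Submodule.mem_sup] at hy'
    obtain ⟨y, hy, x, hx, rfl⟩ := hy'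
    rw [SetLike.mem_coe, mem_tiAdd] at hb
    obtain ⟨i, hi, a, ha, rfl⟩ := hb
    have ha' : a ∈ colR (X : Set M) Set.univ := by
      rw [← coe_colTI_top X]; exact ha
    have e : op (i + a) • (y + x) = op i • y + (op a • y + (op i • x + op a • x)) := by
      rw [op_add, add_smul, smul_add, smul_add]
      abel
    rw [e]
    refine X.add_mem ?_ (X.add_mem ?_ (X.add_mem ?_ ?_))
    · exact (hφ X).1 (hYIφ (mem_sProd_gen hy hi))
    · exact ha' y (Set.mem_univ y)
    · exact X.smul_mem _ hx
    · exact ha' x (Set.mem_univ x)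
  have hnsub : ¬ ((sProd ((Y ⊔ X : Submodule Rᵐᵒᵖ M) : Set M)
      ((tiAdd I TA : TwoSidedIdeal R) : Set R) : Set M) ⊆ φ X) := by
    intro hc
    apply h
    refine Set.Subset.trans ?_ hc
    apply sProd_mono_s5
    · exact Set.Subset.trans (by exact_mod_cast SetLike.coe_subset_coe.2 le_sup_right) le_rfl
    · intro a ha
      rw [SetLike.mem_coe, mem_tiAdd]
      refine ⟨0, I.zero_mem, a, ?_, by simp⟩
      rw [hTA, ← SetLike.mem_coe, coe_colTI_top]
      exact ha
  rcases hX.2 (Y ⊔ X) (tiAdd I TA) hsub hnsub with h1 | h1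
  · exact hYX (Set.Subset.trans (by exact_mod_cast SetLike.coe_subset_coe.2 le_sup_left) h1)
  · apply hIA
    intro i hi
    apply h1
    rw [SetLike.mem_coe, mem_tiAdd]
    exact ⟨i, hi, 0, TA.zero_mem, by simp⟩

/-- If `X` is φ-prime but not prime (and `φ X` is a submodule),
then `(X :_R M) ⊆ √((φ X :_R M))`. -/
lemma not_prime_sub_rad (φ : Submodule Rᵐᵒᵖ M → Set M) (hφ : GoodPhi φ) (X : Submodule Rᵐᵒᵖ M)
    (hX : PhiPrime φ X) (P : Submodule Rᵐᵒᵖ M) (hP : φ X = (P : Set M))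
    (hnp : ¬ PrimeSub X) :
    (colR (X : Set M) Set.univ : Set R) ⊆ radSet (colR (φ X) Set.univ) := by
  have hXA := key_XA_sub φ hφ X hX hnp
  have hmul : idMul ((colR (X : Set M) Set.univ : Set R)) ((colR (X : Set M) Set.univ : Set R)) ⊆
      (colR (φ X) Set.univ : Set R) := by
    intro x hx
    refine AddSubmonoid.closure_induction (motive := fun y _ => y ∈ (colR (φ X) Set.univ : Set R)) ?_ ?_ ?_ hx
    · rintro z ⟨a, ha, b, hb, rfl⟩ m -
      have e : op (a * b) • m = op b • (op a • m) := by rw [op_mul, mul_smul]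
      rw [e]
      exact hXA (mem_sProd_gen (ha m (Set.mem_univ m)) hb)
    · intro m _
      rw [op_zero, zero_smul, hP]
      exact P.zero_mem
    · intro a b _ _ ha hb m _
      have ha' := ha m (Set.mem_univ m)
      have hb' := hb m (Set.mem_univ m)
      rw [hP] at ha' hb' ⊢
      rw [op_add, add_smul]
      exact P.add_mem ha' hb'
  intro x hx Q hQ hBQ
  have hcoe := coe_colTI_top X
  have hIJ : idMul ((colTI X (⊤ : Submodule Rᵐᵒᵖ M) : TwoSidedIdeal R) : Set R)
      ((colTI X (⊤ : Submodule Rᵐᵒᵖ M) : TwoSidedIdeal R) : Set R) ⊆ (Q : Set R) := by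
    rw [hcoe]
    exact Set.Subset.trans hmul hBQ
  rcases hQ.2 _ _ hIJ with h | h
  · exact h (hcoe ▸ hx)
  · exact h (hcoe ▸ hx)

/-- If `X` is prime, then `√((φ X :_R M)) ⊆ (X :_R M)`. -/
lemma prime_rad_sub (φ : Submodule Rᵐᵒᵖ M → Set M) (hφ : GoodPhi φ) (X : Submodule Rᵐᵒᵖ M)
    (hp : PrimeSub X) :
    radSet (colR (φ X) Set.univ) ⊆ (colR (X : Set M) Set.univ : Set R) := by
  intro x hx
  have h1 := hx (colTI X (⊤ : Submodule Rᵐᵒᵖ M)) (primeSub_TIPrime hp)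
    (by rw [coe_colTI_top]
        intro r hr m hm
        exact (hφ X).1 (hr m hm))
  rw [← coe_colTI_top X]
  exact h1

/-- Let `X` be a φ-prime submodule of `M` with `φ(X)` a submodule
(in particular `φ(X) ≠ ∅`). Then: (1) `(X :_R M) ⊆ √((φ(X) :_R M))` or
`√((φ(X) :_R M)) ⊆ (X :_R M)`; (2) if `(X :_R M) ⊊ √((φ(X) :_R M))` then `X` is not
prime; (3) if `√((φ(X) :_R M)) ⊊ (X :_R M)` then `X` is prime; (4) if `φ(X)` is a
radical submodule then `(X :_R M) = (φ(X) :_R M)` or `X` is prime. -/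
theorem stmt_5 (φ : Submodule Rᵐᵒᵖ M → Set M) (hφ : GoodPhi φ)
    (X : Submodule Rᵐᵒᵖ M) (hX : PhiPrime φ X)
    (hne : ∃ P : Submodule Rᵐᵒᵖ M, φ X = (P : Set M)) :
    ((colR (X : Set M) Set.univ : Set R) ⊆ radSet (colR (φ X) Set.univ) ∨
      radSet (colR (φ X) Set.univ) ⊆ (colR (X : Set M) Set.univ : Set R)) ∧
    ((colR (X : Set M) Set.univ : Set R) ⊂ radSet (colR (φ X) Set.univ) →
      ¬ PrimeSub X) ∧
    (radSet (colR (φ X) Set.univ) ⊂ (colR (X : Set M) Set.univ : Set R) →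
      PrimeSub X) ∧
    (radSet (colR (φ X) Set.univ) = (colR (φ X) Set.univ : Set R) →
      (colR (X : Set M) Set.univ : Set R) = (colR (φ X) Set.univ : Set R) ∨
        PrimeSub X) := by
  obtain ⟨P, hP⟩ := hne
  have hBA : colR (φ X) Set.univ ⊆ (colR (X : Set M) Set.univ : Set R) :=
    fun r hr m hm => (hφ X).1 (hr m hm)
  have hnp_sub : ¬ PrimeSub X →
      (colR (X : Set M) Set.univ : Set R) ⊆ radSet (colR (φ X) Set.univ) :=
    not_prime_sub_rad φ hφ X hX P hP
  have hp_sub : PrimeSub X →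
      radSet (colR (φ X) Set.univ) ⊆ (colR (X : Set M) Set.univ : Set R) :=
    prime_rad_sub φ hφ X
  refine ⟨?_, ?_, ?_, ?_⟩
  · by_cases hp : PrimeSub X
    · exact Or.inr (hp_sub hp)
    · exact Or.inl (hnp_sub hp)
  · intro hss hp
    exact hss.2 (hp_sub hp)
  · intro hss
    by_contra hp
    exact hss.2 (hnp_sub hp)
  · intro hrad
    by_cases hp : PrimeSub X
    · exact Or.inr hp
    · exact Or.inl (Set.Subset.antisymm (hrad ▸ hnp_sub hp) hBA)
end

section
/- Let X be a proper submodule of M with φ(X) a submodule of M (φ(X) ≠ ∅). Then X is a φ-prime submodule of M if and only if X/φ(X) is a weakly prime submodule of M/φ(X). -/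
open MulOpposite Submodule

variable {R : Type*} [Ring R] {M : Type*} [AddCommGroup M] [Module Rᵐᵒᵖ M]

lemma sProd_map {R : Type*} [Ring R] {M : Type*} [AddCommGroup M] [Module Rᵐᵒᵖ M]
    {N : Type*} [AddCommGroup N] [Module Rᵐᵒᵖ N]
    (f : M →ₗ[Rᵐᵒᵖ] N) (Y : Set M) (A : Set R) :
    (sProd Y A).map f = sProd (f '' Y) A := by
  unfold sProd
  rw [Submodule.map_span]
  congr 1
  ext z
  constructor
  · rintro ⟨w, ⟨y, hy, a, ha, rfl⟩, rfl⟩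
    exact ⟨f y, ⟨y, hy, rfl⟩, a, ha, f.map_smul _ _⟩
  · rintro ⟨_, ⟨y, hy, rfl⟩, a, ha, rfl⟩
    exact ⟨op a • y, ⟨y, hy, a, ha, rfl⟩, f.map_smul _ _⟩

/-- Let `X` be a proper submodule of `M` with `φ(X)` a submodule `P`
(in particular `φ(X) ≠ ∅`). Then `X` is φ-prime in `M` iff `X/φ(X)` is weakly prime
in `M/φ(X)`. -/
theorem stmt_8 (φ : Submodule Rᵐᵒᵖ M → Set M) (hφ : GoodPhi φ)
    (X : Submodule Rᵐᵒᵖ M) (hX : X ≠ ⊤)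
    (P : Submodule Rᵐᵒᵖ M) (hP : φ X = (P : Set M)) :
    PhiPrime φ X ↔ WeaklyPrime (X.map P.mkQ) := by
  have hPX : P ≤ X := fun x hx => (hφ X).1 (hP ▸ hx)
  have hker : LinearMap.ker P.mkQ = P := P.ker_mkQ
  have hcmX : Submodule.comap P.mkQ (X.map P.mkQ) = X := by
    rw [Submodule.comap_map_mkQ, sup_eq_right.mpr hPX]
  have hmapX_ne : X.map P.mkQ ≠ ⊤ := by
    intro h
    apply hX
    have := congrArg (Submodule.comap P.mkQ) h
    rw [hcmX, Submodule.comap_top] at this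
    exact this
  have hcol : ∀ (I : TwoSidedIdeal R),
      ((I : Set R) ⊆ colR (X : Set M) Set.univ ↔
        (I : Set R) ⊆ colR ((X.map P.mkQ : Submodule Rᵐᵒᵖ (M ⧸ P)) : Set (M ⧸ P)) Set.univ) := by
    intro I
    constructor
    · intro h r hr m' _
      obtain ⟨m, rfl⟩ := P.mkQ_surjective m'
      rw [← map_smul]
      exact ⟨op r • m, h hr m trivial, rfl⟩
    · intro h r hr m _
      have : op r • P.mkQ m ∈ X.map P.mkQ := h hr (P.mkQ m) trivial
      rw [← map_smul] at this
      have : op r • m ∈ Submodule.comap P.mkQ (X.map P.mkQ) := this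
      rwa [hcmX] at this
  constructor
  · rintro ⟨-, hpr⟩
    refine ⟨hmapX_ne, fun Y' I hne hsub => ?_⟩
    set Y : Submodule Rᵐᵒᵖ M := Y'.comap P.mkQ with hY
    have hmapY : Y.map P.mkQ = Y' := by
      rw [hY, Submodule.map_comap_eq, Submodule.range_mkQ, top_inf_eq]
    have hSmap : (sProd (Y : Set M) (I : Set R)).map P.mkQ = sProd (Y' : Set (M ⧸ P)) (I : Set R) := by
      rw [sProd_map, ← Submodule.map_coe, hmapY]
    have hS_le : sProd (Y : Set M) (I : Set R) ≤ X := by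
      rw [← hcmX, ← Submodule.map_le_iff_le_comap, hSmap]
      exact hsub
    have hS_not : ¬((sProd (Y : Set M) (I : Set R) : Set M) ⊆ φ X) := by
      rw [hP]
      intro hle
      apply hne
      rw [← hSmap, ← le_bot_iff, Submodule.map_le_iff_le_comap]
      intro x hx
      simp only [Submodule.mem_comap, Submodule.comap_bot]
      rw [hker]
      exact hle hx
    rcases hpr Y I hS_le hS_not with h | h
    · left
      rw [← hmapY, Submodule.map_coe]
      exact Set.image_mono h
    · right
      exact (hcol I).mp h
  · rintro ⟨-, hpr⟩
    refine ⟨hX, fun Y I hsub hnsub => ?_⟩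
    set Y' : Submodule Rᵐᵒᵖ (M ⧸ P) := Y.map P.mkQ with hY'
    have hSmap : (sProd (Y : Set M) (I : Set R)).map P.mkQ = sProd (Y' : Set (M ⧸ P)) (I : Set R) := by
      rw [sProd_map, ← Submodule.map_coe]
    have hS_le : sProd (Y : Set M) (I : Set R) ≤ X := hsub
    have hne : sProd (Y' : Set (M ⧸ P)) (I : Set R) ≠ ⊥ := by
      rw [← hSmap]
      intro h
      apply hnsub
      rw [hP]
      intro x hx
      have : P.mkQ x ∈ (⊥ : Submodule Rᵐᵒᵖ (M ⧸ P)) := h ▸ Submodule.mem_map_of_mem hx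
      rw [Submodule.mem_bot] at this
      exact hker ▸ LinearMap.mem_ker.mpr this
    have hsub' : (sProd (Y' : Set (M ⧸ P)) (I : Set R) : Set (M ⧸ P)) ⊆ (X.map P.mkQ : Set (M ⧸ P)) := by
      rw [← hSmap]
      exact Set.image_mono hS_le
    rcases hpr Y' I hne hsub' with h | h
    · left
      intro y hy
      have : P.mkQ y ∈ X.map P.mkQ := h (Submodule.mem_map_of_mem hy)
      have : y ∈ Submodule.comap P.mkQ (X.map P.mkQ) := this
      rwa [hcmX] at this
    · right
      exact (hcol I).mpr h
end
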